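/- Joining identity (algebraic core of the Schwinger–Dyson equations): let (V₁, W₁, σ) be a closed D-colored graph with a black vertex w̄₁ : W₁, and let (V₂, W₂, τ) be another closed D-colored graph. Then in the polynomial ring R, Σ_{p : Fin D → Fin N} (pderiv (Sum.inl p) tr_τ) · tr_{σ,w̄₁}(p) = Σ_{v : V₂} tr_{τ ⋆_{(v,w̄₁)} σ}. -/
import Mathlib


open scoped BigOperators

variable {D N : ℕ}

-- The colored gluing `σ ⋆_{(v₁,w₂)} τ` of two closed `D`-colored graphs at the white
-- vertex `v₁` of the first and the black vertex `w₂` of the second: the two vertices are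
-- deleted and the lines touching them are joined pairwise respecting the colors.
open Classical in
noncomputable def glue {V₁ W₁ V₂ W₂ : Type*}
    (σ : Fin D → V₁ ≃ W₁) (τ : Fin D → V₂ ≃ W₂) (v₁ : V₁) (w₂ : W₂) (i : Fin D) :
    ({v : V₁ // v ≠ v₁} ⊕ V₂) ≃ (W₁ ⊕ {w : W₂ // w ≠ w₂}) where
  toFun :=
    Sum.elim (fun v => Sum.inl (σ i v.1))
      (fun v => if h : τ i v = w₂ then Sum.inl (σ i v₁) else Sum.inr ⟨τ i v, h⟩)
  invFun :=
    Sum.elim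
      (fun w => if h : (σ i).symm w = v₁ then Sum.inr ((τ i).symm w₂)
        else Sum.inl ⟨(σ i).symm w, h⟩)
      (fun w => Sum.inr ((τ i).symm w.1))
  left_inv := by
    rintro (⟨v, hv⟩ | v)
    · simp only [Sum.elim_inl]
      rw [dif_neg (by simpa using hv)]
      simp
    · simp only [Sum.elim_inr]
      split_ifs with h
      · simp only [Sum.elim_inl]
        rw [dif_pos (by simp)]
        simp [← h]
      · simp
  right_inv := by
    rintro (w | ⟨w, hw⟩)
    · simp only [Sum.elim_inl]
      split_ifs with h
      · simp only [Sum.elim_inr]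
        rw [dif_pos (by simp), ← h]
        simp
      · simp
    · simp only [Sum.elim_inr, Equiv.apply_symm_apply]
      rw [dif_neg (by simpa using hw)]

/-- The polynomial ring in the tensor entries `T_n` (variables `Sum.inl n`) and their
complex conjugates `T̄_n` (variables `Sum.inr n`). -/
abbrev TensorRing (D N : ℕ) : Type :=
  MvPolynomial ((Fin D → Fin N) ⊕ (Fin D → Fin N)) ℂ

-- The trace invariant of a closed `D`-colored graph, as a polynomial in the tensor entries.
open Classical in
noncomputable def tracePoly {V W : Type*} [Finite V] [Finite W]
    (σ : Fin D → V ≃ W) : TensorRing D N :=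
  letI := Fintype.ofFinite V
  letI := Fintype.ofFinite W
  ∑ a : V → Fin D → Fin N,
    (∏ v, MvPolynomial.X (Sum.inl (a v))) *
      ∏ w, MvPolynomial.X (Sum.inr fun i => a ((σ i).symm w) i)

-- The trace invariant polynomial opened at the black vertex `w₁`: the factor
-- `X (Sum.inr (fun i => a ((σ i).symm w₁) i))` is replaced by the Kronecker delta.
open Classical in
noncomputable def tracePolyBlack {V W : Type*} [Finite V] [Finite W]
    (σ : Fin D → V ≃ W) (w₁ : W) (p : Fin D → Fin N) : TensorRing D N :=
  letI := Fintype.ofFinite V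
  letI := Fintype.ofFinite W
  ∑ a : V → Fin D → Fin N,
    (∏ v, MvPolynomial.X (Sum.inl (a v))) *
      ∏ w, if w = w₁ then ∏ i, (if a ((σ i).symm w) i = p i then (1 : TensorRing D N) else 0)
        else MvPolynomial.X (Sum.inr fun i => a ((σ i).symm w) i)


open MvPolynomial Finset in
private lemma pderiv_prod_X {ι κ : Type*} [DecidableEq ι] [DecidableEq κ] (s : Finset ι)
    (f : ι → κ) (j : κ) :
    pderiv j (∏ v ∈ s, (X (f v) : MvPolynomial κ ℂ)) =
      ∑ v ∈ s, (if f v = j then 1 else 0) * ∏ u ∈ s.erase v, X (f u) := by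
  induction s using Finset.induction_on with
  | empty => simp
  | @insert x s hx ih =>
    rw [Finset.prod_insert hx, pderiv_mul, ih, Finset.sum_insert hx, Finset.erase_insert hx,
      Finset.mul_sum]
    congr 1
    · congr 1
      rw [pderiv_X, Pi.single_apply]
    · refine Finset.sum_congr rfl fun v hv => ?_
      rw [Finset.erase_insert_of_ne (by rintro rfl; exact hx hv),
        Finset.prod_insert (fun h => hx (Finset.mem_of_mem_erase h))]
      exact mul_left_comm _ _ _

open MvPolynomial Finset in
private lemma tracePoly_def {V W : Type*} [Fintype V] [DecidableEq V] [Fintype W]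
    (σ : Fin D → V ≃ W) :
    tracePoly (N := N) σ = ∑ a : V → Fin D → Fin N,
      (∏ v, X (Sum.inl (a v))) * ∏ w, X (Sum.inr fun i => a ((σ i).symm w) i) := by
  unfold tracePoly
  congr!

open MvPolynomial Finset in
private lemma pderiv_tracePoly {V W : Type*} [Fintype V] [DecidableEq V] [Fintype W]
    (τ : Fin D → V ≃ W) (q : Fin D → Fin N) :
    pderiv (Sum.inl q) (tracePoly (N := N) τ) =
      ∑ a : V → Fin D → Fin N, ∑ v : V,
        (if a v = q then 1 else 0) *
          ((∏ u ∈ univ.erase v, X (Sum.inl (a u))) *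
            ∏ w, X (Sum.inr fun i => a ((τ i).symm w) i)) := by
  classical
  rw [tracePoly_def, map_sum]
  refine Finset.sum_congr rfl fun a _ => ?_
  rw [pderiv_mul, pderiv_prod_X, pderiv_prod_X, Finset.sum_mul]
  simp only [Sum.inl.injEq, reduceCtorEq, if_false, zero_mul, Finset.sum_const_zero,
    mul_zero, add_zero, mul_assoc]

open MvPolynomial Finset in
private lemma tracePolyBlack_eq {V W : Type*} [Fintype V] [DecidableEq V] [Fintype W]
    [DecidableEq W] (σ : Fin D → V ≃ W) (w₁ : W) (p : Fin D → Fin N) :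
    tracePolyBlack (N := N) σ w₁ p = ∑ b : V → Fin D → Fin N,
      (if (fun i => b ((σ i).symm w₁) i) = p then 1 else 0) *
        ((∏ v, X (Sum.inl (b v))) *
          ∏ w ∈ univ.erase w₁, X (Sum.inr fun i => b ((σ i).symm w) i)) := by
  classical
  have unf : tracePolyBlack (N := N) σ w₁ p = ∑ b : V → Fin D → Fin N,
      (∏ v, X (Sum.inl (b v))) *
        ∏ w : W, @ite (TensorRing D N) (w = w₁) (Classical.propDecidable _)
          (∏ i, (if b ((σ i).symm w) i = p i then (1 : TensorRing D N) else 0))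
          (X (Sum.inr fun i => b ((σ i).symm w) i)) := by
    unfold tracePolyBlack
    congr!
  rw [unf]
  refine Finset.sum_congr rfl fun b _ => ?_
  rw [← Finset.mul_prod_erase univ _ (Finset.mem_univ w₁), if_pos rfl]
  have h1 : (∏ i, (if b ((σ i).symm w₁) i = p i then (1 : TensorRing D N) else 0))
      = if (fun i => b ((σ i).symm w₁) i) = p then 1 else 0 := by
    rw [Finset.prod_boole]
    simp [funext_iff]
  have h2 : (∏ w ∈ univ.erase w₁, @ite (TensorRing D N) (w = w₁) (Classical.propDecidable _)
        (∏ i, (if b ((σ i).symm w) i = p i then (1 : TensorRing D N) else 0))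
        (X (Sum.inr fun i => b ((σ i).symm w) i)))
      = ∏ w ∈ univ.erase w₁, X (Sum.inr fun i => b ((σ i).symm w) i) :=
    Finset.prod_congr rfl fun w hw => if_neg (Finset.ne_of_mem_erase hw)
  rw [h1, h2]
  ring

open Classical in
private lemma glue_symm_inl {V₁ W₁ V₂ W₂ : Type*}
    (σ : Fin D → V₁ ≃ W₁) (τ : Fin D → V₂ ≃ W₂) (v₁ : V₁) (w₂ : W₂) (i : Fin D) (w : W₁) :
    (glue σ τ v₁ w₂ i).symm (Sum.inl w) =
      if h : (σ i).symm w = v₁ then Sum.inr ((τ i).symm w₂)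
        else Sum.inl ⟨(σ i).symm w, h⟩ := rfl

open Classical in
private lemma glue_symm_inr {V₁ W₁ V₂ W₂ : Type*}
    (σ : Fin D → V₁ ≃ W₁) (τ : Fin D → V₂ ≃ W₂) (v₁ : V₁) (w₂ : W₂) (i : Fin D)
    (w : {w : W₂ // w ≠ w₂}) :
    (glue σ τ v₁ w₂ i).symm (Sum.inr w) = Sum.inr ((τ i).symm w.1) := rfl

open MvPolynomial Finset in
private lemma glue_trace {V₁ W₁ V₂ W₂ : Type*}
    [Fintype V₁] [DecidableEq V₁] [Fintype W₁] [DecidableEq W₁]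
    [Fintype V₂] [DecidableEq V₂] [Fintype W₂]
    (σ : Fin D → V₁ ≃ W₁) (wb₁ : W₁) (τ : Fin D → V₂ ≃ W₂) (v : V₂) :
    tracePoly (N := N) (glue τ σ v wb₁) =
      ∑ b : V₁ → Fin D → Fin N, ∑ a' : {u : V₂ // u ≠ v} → Fin D → Fin N,
        ((∏ u : {u : V₂ // u ≠ v}, X (Sum.inl (a' u))) *
          ∏ w : W₂, X (Sum.inr fun i =>
            if h : (τ i).symm w = v then b ((σ i).symm wb₁) i else a' ⟨(τ i).symm w, h⟩ i)) *
        ((∏ v₁, X (Sum.inl (b v₁))) *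
          ∏ w ∈ univ.erase wb₁, X (Sum.inr fun i => b ((σ i).symm w) i)) := by
  classical
  rw [tracePoly_def,
    ← Equiv.sum_comp (Equiv.sumArrowEquivProdArrow {u : V₂ // u ≠ v} V₁ (Fin D → Fin N)).symm,
    Fintype.sum_prod_type, Finset.sum_comm]
  refine Finset.sum_congr rfl fun b _ => Finset.sum_congr rfl fun a' _ => ?_
  have hc : (Equiv.sumArrowEquivProdArrow {u : V₂ // u ≠ v} V₁ (Fin D → Fin N)).symm
      (a', b) = Sum.elim a' b := rfl
  rw [hc, Fintype.prod_sum_type, Fintype.prod_sum_type, mul_mul_mul_comm]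
  congr 1
  · congr 1
    refine Finset.prod_congr rfl fun w _ =>
      congrArg (fun g => X (Sum.inr g)) (funext fun i => ?_)
    rw [glue_symm_inl]
    split_ifs with h <;> rfl
  · congr 1
    rw [Finset.prod_subtype (p := fun w => w ≠ wb₁) (univ.erase wb₁) (fun w => by simp)
      (fun w => X (Sum.inr fun i => b ((σ i).symm w) i) : W₁ → TensorRing D N)]
    refine Finset.prod_congr rfl fun w _ =>
      congrArg (fun g => X (Sum.inr g)) (funext fun i => ?_)
    rw [glue_symm_inr]
    rfl

open MvPolynomial Finset in
/-- **Statement 17.** The joining identity, algebraic core of the Schwinger–Dyson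
equations: `Σ_p (∂_{T_p} tr_τ) · tr_{σ,w̄₁}(p) = Σ_{v : V₂} tr_{τ ⋆_{(v,w̄₁)} σ}`. -/
theorem joining_identity {D N : ℕ} (hD : 1 ≤ D) (hN : 1 ≤ N)
    {V₁ W₁ V₂ W₂ : Type*} [Fintype V₁] [Fintype W₁] [Fintype V₂] [Fintype W₂]
    (σ : Fin D → V₁ ≃ W₁) (wb₁ : W₁) (τ : Fin D → V₂ ≃ W₂) :
    ∑ p : Fin D → Fin N,
        MvPolynomial.pderiv (Sum.inl p) (tracePoly τ) * tracePolyBlack σ wb₁ p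
      = ∑ v : V₂, tracePoly (glue τ σ v wb₁) := by
  classical
  have step1 : ∀ (q : Fin D → Fin N) (G : TensorRing D N),
      (∑ p : Fin D → Fin N, pderiv (Sum.inl p) (tracePoly (N := N) τ) *
        ((if q = p then (1 : TensorRing D N) else 0) * G))
      = pderiv (Sum.inl q) (tracePoly (N := N) τ) * G := by
    intro q G
    have h : ∀ p : Fin D → Fin N,
        pderiv (Sum.inl p) (tracePoly (N := N) τ) *
          ((if q = p then (1 : TensorRing D N) else 0) * G)
        = if q = p then pderiv (Sum.inl p) (tracePoly (N := N) τ) * G else 0 := by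
      intro p; split_ifs <;> simp
    rw [Finset.sum_congr rfl fun p _ => h p, Finset.sum_ite_eq, if_pos (Finset.mem_univ q)]
  have step2 : ∀ (v : V₂) (q : Fin D → Fin N) (G : TensorRing D N),
      (∑ x : Fin D → Fin N, ∑ a' : {u : V₂ // u ≠ v} → Fin D → Fin N,
        ((if ((Equiv.funSplitAt v (Fin D → Fin N)).symm (x, a')) v = q
            then (1 : TensorRing D N) else 0) *
          ((∏ u ∈ univ.erase v,
              X (Sum.inl (((Equiv.funSplitAt v (Fin D → Fin N)).symm (x, a')) u))) *
            ∏ w : W₂, X (Sum.inr fun i =>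
              ((Equiv.funSplitAt v (Fin D → Fin N)).symm (x, a')) ((τ i).symm w) i))) * G)
      = ∑ a' : {u : V₂ // u ≠ v} → Fin D → Fin N,
          ((∏ u : {u : V₂ // u ≠ v}, X (Sum.inl (a' u))) *
            ∏ w : W₂, X (Sum.inr fun i =>
              if h : (τ i).symm w = v then q i else a' ⟨(τ i).symm w, h⟩ i)) * G := by
    intro v q G
    have hv : ∀ (x : Fin D → Fin N) (a' : {u : V₂ // u ≠ v} → Fin D → Fin N),
        ((Equiv.funSplitAt v (Fin D → Fin N)).symm (x, a')) v = x := by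
      intro x a'; simp [Equiv.funSplitAt, Equiv.piSplitAt]
    have hne : ∀ (x : Fin D → Fin N) (a' : {u : V₂ // u ≠ v} → Fin D → Fin N)
        (u : V₂) (h : u ≠ v),
        ((Equiv.funSplitAt v (Fin D → Fin N)).symm (x, a')) u = a' ⟨u, h⟩ := by
      intro x a' u h; simp [Equiv.funSplitAt, Equiv.piSplitAt, h]
    rw [Finset.sum_comm]
    refine Finset.sum_congr rfl fun a' _ => ?_
    have h : ∀ x : Fin D → Fin N,
        ((if ((Equiv.funSplitAt v (Fin D → Fin N)).symm (x, a')) v = q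
            then (1 : TensorRing D N) else 0) *
          ((∏ u ∈ univ.erase v,
              X (Sum.inl (((Equiv.funSplitAt v (Fin D → Fin N)).symm (x, a')) u))) *
            ∏ w : W₂, X (Sum.inr fun i =>
              ((Equiv.funSplitAt v (Fin D → Fin N)).symm (x, a')) ((τ i).symm w) i))) * G
        = if x = q then
            ((∏ u ∈ univ.erase v,
                X (Sum.inl (((Equiv.funSplitAt v (Fin D → Fin N)).symm (x, a')) u))) *
              ∏ w : W₂, X (Sum.inr fun i =>
                ((Equiv.funSplitAt v (Fin D → Fin N)).symm (x, a')) ((τ i).symm w) i)) * G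
          else 0 := by
      intro x
      rw [hv]
      split_ifs <;> simp
    rw [Finset.sum_congr rfl fun x _ => h x, Finset.sum_ite_eq', if_pos (Finset.mem_univ q)]
    congr 1
    congr 1
    · rw [Finset.prod_subtype (p := fun u => u ≠ v) (univ.erase v) (fun u => by simp)
        (fun u => X (Sum.inl (((Equiv.funSplitAt v (Fin D → Fin N)).symm (q, a')) u))
          : V₂ → TensorRing D N)]
      exact Finset.prod_congr rfl fun u _ => by rw [hne q a' u.1 u.2]
    · refine Finset.prod_congr rfl fun w _ =>
        congrArg (fun g => X (Sum.inr g)) (funext fun i => ?_)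
      by_cases h : (τ i).symm w = v
      · rw [dif_pos h, h, hv]
      · rw [dif_neg h, hne q a' _ h]
  calc
    (∑ p : Fin D → Fin N,
        pderiv (Sum.inl p) (tracePoly τ) * tracePolyBlack σ wb₁ p)
        = ∑ b : V₁ → Fin D → Fin N,
            pderiv (Sum.inl fun i => b ((σ i).symm wb₁) i) (tracePoly (N := N) τ) *
              ((∏ v₁, X (Sum.inl (b v₁))) *
                ∏ w ∈ univ.erase wb₁, X (Sum.inr fun i => b ((σ i).symm w) i)) := by
      simp_rw [tracePolyBlack_eq σ wb₁, Finset.mul_sum]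
      rw [Finset.sum_comm]
      exact Finset.sum_congr rfl fun b _ => step1 _ _
    _ = ∑ v : V₂, ∑ b : V₁ → Fin D → Fin N,
          ∑ a' : {u : V₂ // u ≠ v} → Fin D → Fin N,
          ((∏ u : {u : V₂ // u ≠ v}, X (Sum.inl (a' u))) *
            ∏ w : W₂, X (Sum.inr fun i =>
              if h : (τ i).symm w = v then b ((σ i).symm wb₁) i
              else a' ⟨(τ i).symm w, h⟩ i)) *
          ((∏ v₁, X (Sum.inl (b v₁))) *
            ∏ w ∈ univ.erase wb₁, X (Sum.inr fun i => b ((σ i).symm w) i)) := by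
      simp_rw [pderiv_tracePoly τ, Finset.sum_mul]
      conv_rhs => rw [Finset.sum_comm]
      refine Finset.sum_congr rfl fun b _ => ?_
      rw [Finset.sum_comm]
      refine Finset.sum_congr rfl fun v _ => ?_
      rw [← Equiv.sum_comp (Equiv.funSplitAt v (Fin D → Fin N)).symm, Fintype.sum_prod_type]
      exact step2 v _ _
    _ = ∑ v : V₂, tracePoly (glue τ σ v wb₁) :=
      Finset.sum_congr rfl fun v _ => (glue_trace σ wb₁ τ v).symm
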